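/- Let x¹, x², x³, p be points in ℝⁿ and let x̃¹, x̃², x̃³ be points in ℝ² such that ‖x̃ⁱ − x̃ʲ‖ ≤ ‖xⁱ − xʲ‖ for all i, j. Then there exists a point p̃ ∈ ℝ² such that ‖p̃ − x̃ⁱ‖ ≤ ‖p − xⁱ‖ for i = 1, 2, 3. -/

import Mathlib

open Set Metric Filter

open scoped RealInnerProductSpace

section aux

variable {F : Type*} [NormedAddCommGroup F] [InnerProductSpace ℝ F]

lemma kir_variance {ι : Type*} (t : Finset ι) (w : ι → ℝ) (y : ι → F)
    (hw : ∑ i ∈ t, w i = 1) {c : F} (hc : c = ∑ i ∈ t, w i • y i) (q : F) :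
    ∑ i ∈ t, w i * ‖y i - q‖ ^ 2
      = (∑ i ∈ t, w i * ‖y i - c‖ ^ 2) + ‖c - q‖ ^ 2 := by
  have hzero : ∑ i ∈ t, w i • (y i - c) = 0 := by
    simp only [smul_sub, Finset.sum_sub_distrib, ← hc, ← Finset.sum_smul, hw, one_smul, sub_self]
  have key : ∀ i ∈ t, w i * ‖y i - q‖ ^ 2
      = w i * ‖y i - c‖ ^ 2 + (2 * ⟪w i • (y i - c), c - q⟫ + w i * ‖c - q‖ ^ 2) := by
    intro i _
    have hy : y i - q = (y i - c) + (c - q) := by abel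
    rw [hy, norm_add_sq_real, real_inner_smul_left]
    ring
  rw [Finset.sum_congr rfl key, Finset.sum_add_distrib, Finset.sum_add_distrib,
    ← Finset.mul_sum, ← sum_inner, hzero, inner_zero_left, ← Finset.sum_mul, hw]
  ring

lemma kir_doublesum {ι : Type*} (t : Finset ι) (w : ι → ℝ) (y : ι → F)
    (hw : ∑ i ∈ t, w i = 1) {c : F} (hc : c = ∑ i ∈ t, w i • y i) :
    ∑ i ∈ t, ∑ j ∈ t, w i * w j * ‖y j - y i‖ ^ 2
      = 2 * ∑ i ∈ t, w i * ‖y i - c‖ ^ 2 := by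
  have inner_eq : ∀ i ∈ t, ∑ j ∈ t, w i * w j * ‖y j - y i‖ ^ 2
      = w i * ((∑ j ∈ t, w j * ‖y j - c‖ ^ 2) + ‖c - y i‖ ^ 2) := by
    intro i _
    rw [← kir_variance t w y hw hc (y i), Finset.mul_sum]
    exact Finset.sum_congr rfl fun j _ => by ring
  rw [Finset.sum_congr rfl inner_eq]
  simp only [mul_add]
  rw [Finset.sum_add_distrib, ← Finset.sum_mul, hw, one_mul]
  have hsymm : ∀ i ∈ t, w i * ‖c - y i‖ ^ 2 = w i * ‖y i - c‖ ^ 2 := fun i _ => by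
    rw [norm_sub_rev]
  rw [Finset.sum_congr rfl hsymm]
  ring

end aux

theorem four_point_kirszbraun_euclidean (n : ℕ)
    (x : Fin 3 → EuclideanSpace ℝ (Fin n)) (p : EuclideanSpace ℝ (Fin n))
    (xt : Fin 3 → EuclideanSpace ℝ (Fin 2))
    (h : ∀ i j, dist (xt i) (xt j) ≤ dist (x i) (x j)) :
    ∃ pt : EuclideanSpace ℝ (Fin 2), ∀ i, dist pt (xt i) ≤ dist p (x i) := by
  classical
  set r : Fin 3 → ℝ := fun i => dist p (x i) with hr
  set φ : Fin 3 → EuclideanSpace ℝ (Fin 2) → ℝ :=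
    fun i q => ‖q - xt i‖ ^ 2 - r i ^ 2 with hφ
  have hne : (Finset.univ : Finset (Fin 3)).Nonempty := Finset.univ_nonempty
  set g : EuclideanSpace ℝ (Fin 2) → ℝ :=
    fun q => Finset.univ.sup' hne (fun i => φ i q) with hg
  have hφcont : ∀ i, Continuous (φ i) := fun i =>
    ((continuous_id.sub continuous_const).norm.pow 2).sub continuous_const
  have hgcont : Continuous g := Continuous.finset_sup'_apply hne (fun i _ => hφcont i)
  have hle : ∀ i q, φ i q ≤ g q := fun i q =>
    Finset.le_sup' (fun j => φ j q) (Finset.mem_univ i)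
  -- existence of a global minimizer of g
  set z0 := xt 0 with hz0
  set M := g z0 with hM
  set R := Real.sqrt (|M| + r 0 ^ 2 + 1) with hR
  have hR0 : 0 ≤ R := Real.sqrt_nonneg _
  have hRsq : R ^ 2 = |M| + r 0 ^ 2 + 1 := Real.sq_sqrt (by positivity)
  obtain ⟨pt, hptmem, hptmin⟩ := (isCompact_closedBall z0 R).exists_isMinOn
    ⟨z0, mem_closedBall_self hR0⟩ hgcont.continuousOn
  have hmin : ∀ q, g pt ≤ g q := by
    intro q
    by_cases hq : q ∈ closedBall z0 R
    · exact hptmin hq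
    · have h1 : g pt ≤ M := hptmin (mem_closedBall_self hR0)
      have h2 : R < dist q z0 := by simpa [mem_closedBall, not_le] using hq
      have h3 : R ^ 2 < ‖q - z0‖ ^ 2 := by
        rw [← dist_eq_norm]
        nlinarith
      have h4 : M < φ 0 q := by
        have habs := le_abs_self M
        have h5 : φ 0 q = ‖q - z0‖ ^ 2 - r 0 ^ 2 := rfl
        nlinarith
      exact h1.trans (h4.le.trans (hle 0 q))
  -- the active set
  set A : Finset (Fin 3) := Finset.univ.filter (fun i => φ i pt = g pt) with hA
  have hAne : A.Nonempty := by
    obtain ⟨i, -, hi⟩ := Finset.exists_mem_eq_sup' hne (fun i => φ i pt)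
    exact ⟨i, Finset.mem_filter.2 ⟨Finset.mem_univ i, hi.symm⟩⟩
  set S : Finset (EuclideanSpace ℝ (Fin 2)) := A.image xt with hS
  set K : Set (EuclideanSpace ℝ (Fin 2)) := convexHull ℝ (S : Set (EuclideanSpace ℝ (Fin 2)))
    with hK
  -- the minimizer lies in the convex hull of the active points
  have hptK : pt ∈ K := by
    by_contra hout
    obtain ⟨f, u, hfu, hub⟩ := geometric_hahn_banach_point_closed
      (convex_convexHull ℝ _) ((S.finite_toSet.isCompact_convexHull (𝕜 := ℝ)).isClosed) hout
    set v : EuclideanSpace ℝ (Fin 2) :=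
      (InnerProductSpace.toDual ℝ (EuclideanSpace ℝ (Fin 2))).symm f with hv
    have hvz : ∀ z, ⟪v, z⟫ = f z := fun z => InnerProductSpace.toDual_symm_apply
    set δ := u - f pt with hδ
    have hδpos : 0 < δ := sub_pos.2 hfu
    have hkey : ∀ i ∈ A, ⟪pt - xt i, v⟫ < -δ := by
      intro i hi
      have hz : xt i ∈ K := subset_convexHull ℝ _
        (Finset.mem_coe.2 (Finset.mem_image_of_mem xt hi))
      have h2 := hub _ hz
      have h1 : ⟪pt - xt i, v⟫ = f pt - f (xt i) := by
        rw [real_inner_comm, hvz, map_sub]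
      rw [h1]
      linarith
    have hexp : ∀ (i : Fin 3) (t : ℝ), φ i (pt + t • v)
        = φ i pt + t * (2 * ⟪pt - xt i, v⟫ + t * ‖v‖ ^ 2) := by
      intro i t
      have h1 : pt + t • v - xt i = (pt - xt i) + t • v := by abel
      have h2 : ‖t • v‖ ^ 2 = t ^ 2 * ‖v‖ ^ 2 := by
        rw [norm_smul, mul_pow, Real.norm_eq_abs, sq_abs]
      simp only [hφ]
      rw [h1, norm_add_sq_real, real_inner_smul_right, h2]
      ring
    have hev : ∀ i : Fin 3, ∀ᶠ t in nhdsWithin (0 : ℝ) (Set.Ioi 0),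
        φ i (pt + t • v) < g pt := by
      intro i
      by_cases hi : i ∈ A
      · have hφi : φ i pt = g pt := (Finset.mem_filter.1 hi).2
        have hcont : Continuous fun t : ℝ => 2 * ⟪pt - xt i, v⟫ + t * ‖v‖ ^ 2 :=
          continuous_const.add (continuous_id.mul continuous_const)
        have hneg : 2 * ⟪pt - xt i, v⟫ + (0 : ℝ) * ‖v‖ ^ 2 < 0 := by
          have := hkey i hi
          nlinarith
        have h1 : ∀ᶠ t in nhdsWithin (0 : ℝ) (Set.Ioi 0),
            2 * ⟪pt - xt i, v⟫ + t * ‖v‖ ^ 2 < 0 :=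
          ((hcont.tendsto 0).eventually_lt_const hneg).filter_mono nhdsWithin_le_nhds
        filter_upwards [h1, self_mem_nhdsWithin] with t h1t h2t
        rw [hexp i t, hφi]
        have : t * (2 * ⟪pt - xt i, v⟫ + t * ‖v‖ ^ 2) < 0 :=
          mul_neg_of_pos_of_neg h2t h1t
        linarith
      · have hφi : φ i pt < g pt := lt_of_le_of_ne (hle i pt) (by
          intro hcon
          exact hi (Finset.mem_filter.2 ⟨Finset.mem_univ i, hcon⟩))
        have hcont : Continuous fun t : ℝ => φ i (pt + t • v) :=
          (hφcont i).comp (continuous_const.add (continuous_id.smul continuous_const))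
        have h1 : ∀ᶠ t in nhdsWithin (0 : ℝ) (Set.Ioi 0), φ i (pt + t • v) < g pt := by
          have h2 : Tendsto (fun t : ℝ => φ i (pt + t • v)) (nhds 0) (nhds (φ i pt)) := by
            have := hcont.tendsto 0
            simpa using this
          exact (h2.eventually_lt_const hφi).filter_mono nhdsWithin_le_nhds
        exact h1
    have hall : ∀ᶠ t in nhdsWithin (0 : ℝ) (Set.Ioi 0),
        ∀ i, φ i (pt + t • v) < g pt := eventually_all.2 hev
    obtain ⟨t, ht⟩ := hall.exists
    have hlt : g (pt + t • v) < g pt := (Finset.sup'_lt_iff hne).2 fun i _ => ht i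
    exact absurd (hmin _) (not_le.2 hlt)
  -- extract convex combination weights and transfer to ℝⁿ
  rw [hK, Finset.convexHull_eq] at hptK
  obtain ⟨w, hw0, hw1, hwc⟩ := hptK
  have hrep : ∀ z ∈ S, ∃ i, i ∈ A ∧ xt i = z := by
    intro z hz
    obtain ⟨i, hi, rfl⟩ := Finset.mem_image.1 hz
    exact ⟨i, hi, rfl⟩
  choose! j hjA hjx using hrep
  set y : EuclideanSpace ℝ (Fin 2) → EuclideanSpace ℝ (Fin n) := fun z => x (j z) with hy
  have hcenter : pt = ∑ z ∈ S, w z • z := by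
    rw [← hwc, Finset.centerMass_eq_of_sum_1 _ _ hw1]
    simp
  set c' : EuclideanSpace ℝ (Fin n) := ∑ z ∈ S, w z • y z with hc'
  have hact : ∀ z ∈ S, ‖pt - z‖ ^ 2 - r (j z) ^ 2 = g pt := by
    intro z hz
    have h1 : φ (j z) pt = g pt := (Finset.mem_filter.1 (hjA z hz)).2
    rw [← h1]
    simp only [hφ]
    rw [hjx z hz]
  have hdist : ∀ z ∈ S, ∀ z' ∈ S, ‖z' - z‖ ≤ ‖y z' - y z‖ := by
    intro z hz z' hz'
    have h2 := h (j z') (j z)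
    rw [dist_eq_norm, dist_eq_norm, hjx z hz, hjx z' hz'] at h2
    exact h2
  -- final computation : g pt ≤ 0
  suffices hgle : g pt ≤ 0 by
    refine ⟨pt, fun i => ?_⟩
    have h1 := (hle i pt).trans hgle
    have h2 : ‖pt - xt i‖ ^ 2 ≤ r i ^ 2 := by
      simp only [hφ] at h1
      linarith
    have h3 : dist pt (xt i) ≤ r i := by
      rw [dist_eq_norm]
      nlinarith [norm_nonneg (pt - xt i), dist_nonneg (x := p) (y := x i)]
    exact h3
  have E1 : g pt = (∑ z ∈ S, w z * ‖z - pt‖ ^ 2) - ∑ z ∈ S, w z * ‖y z - p‖ ^ 2 := by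
    have hterm : ∀ z ∈ S, w z * g pt = w z * ‖z - pt‖ ^ 2 - w z * ‖y z - p‖ ^ 2 := by
      intro z hz
      have h1 := hact z hz
      have h2 : r (j z) = ‖y z - p‖ := by
        rw [hr]
        simp only [hy]
        rw [dist_comm, dist_eq_norm]
      rw [norm_sub_rev pt z] at h1
      rw [← h1, h2]
      ring
    calc g pt = ∑ z ∈ S, w z * g pt := by rw [← Finset.sum_mul, hw1, one_mul]
    _ = ∑ z ∈ S, (w z * ‖z - pt‖ ^ 2 - w z * ‖y z - p‖ ^ 2) := Finset.sum_congr rfl hterm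
    _ = (∑ z ∈ S, w z * ‖z - pt‖ ^ 2) - ∑ z ∈ S, w z * ‖y z - p‖ ^ 2 :=
        Finset.sum_sub_distrib _ _
  have hV : ∑ z ∈ S, w z * ‖z - pt‖ ^ 2 ≤ ∑ z ∈ S, w z * ‖y z - c'‖ ^ 2 := by
    have d1 := kir_doublesum S w id hw1 (c := pt) (by simpa using hcenter)
    have d2 := kir_doublesum S w y hw1 hc'
    have hmono : ∑ z ∈ S, ∑ z' ∈ S, w z * w z' * ‖id z' - id z‖ ^ 2
        ≤ ∑ z ∈ S, ∑ z' ∈ S, w z * w z' * ‖y z' - y z‖ ^ 2 := by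
      refine Finset.sum_le_sum fun z hz => Finset.sum_le_sum fun z' hz' => ?_
      have hnn : 0 ≤ w z * w z' := mul_nonneg (hw0 z hz) (hw0 z' hz')
      refine mul_le_mul_of_nonneg_left ?_ hnn
      exact pow_le_pow_left₀ (norm_nonneg _) (hdist z hz z' hz') 2
    simp only [id] at d1 hmono
    linarith
  have hrad : ∑ z ∈ S, w z * ‖y z - p‖ ^ 2
      = (∑ z ∈ S, w z * ‖y z - c'‖ ^ 2) + ‖c' - p‖ ^ 2 := kir_variance S w y hw1 hc' p
  have hfin : g pt ≤ -‖c' - p‖ ^ 2 := by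
    rw [E1, hrad]
    linarith
  nlinarith [sq_nonneg ‖c' - p‖]
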